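/- For μ ∈ (0,1) and a positive integer T, Σ_{t=1}^T 1/√(1-μ^t) ≤ T - 2·ln(1+√(1-μ^T))/ln μ. -/

import Mathlib

open Real Finset

theorem stmt4 (μ : ℝ) (hμ0 : 0 < μ) (hμ1 : μ < 1) (T : ℕ) (hT : 0 < T) :
    ∑ t ∈ Finset.Icc 1 T, 1 / Real.sqrt (1 - μ ^ t)
      ≤ (T : ℝ) - 2 * Real.log (1 + Real.sqrt (1 - μ ^ T)) / Real.log μ := by
  have hL : Real.log μ < 0 := Real.log_neg hμ0 hμ1
  set F : ℝ → ℝ := fun x => x - 2 * Real.log (1 + Real.sqrt (1 - μ ^ x)) / Real.log μ with hF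
  -- derivative
  have hder : ∀ x : ℝ, 0 < x → HasDerivAt F (1 / Real.sqrt (1 - μ ^ x)) x := by
    intro x hx
    have hμx : μ ^ x < 1 := Real.rpow_lt_one hμ0.le hμ1 hx
    have hμxpos : 0 < μ ^ x := Real.rpow_pos_of_pos hμ0 x
    have hpos : 0 < 1 - μ ^ x := by linarith
    set s := Real.sqrt (1 - μ ^ x) with hs
    have hspos : 0 < s := Real.sqrt_pos.mpr hpos
    have hs2 : s ^ 2 = 1 - μ ^ x := Real.sq_sqrt hpos.le
    have h1 : HasDerivAt (fun y : ℝ => μ ^ y) (μ ^ x * Real.log μ) x :=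
      (Real.hasStrictDerivAt_const_rpow hμ0 x).hasDerivAt
    have h2 : HasDerivAt (fun y : ℝ => 1 - μ ^ y) (-(μ ^ x * Real.log μ)) x := by
      exact ((hasDerivAt_const x (1:ℝ)).sub h1).congr_deriv (by simp)
    have h3 := h2.sqrt hpos.ne'
    have h4 : HasDerivAt (fun y : ℝ => 1 + Real.sqrt (1 - μ ^ y))
        (-(μ ^ x * Real.log μ) / (2 * s)) x := by
      exact ((hasDerivAt_const x (1:ℝ)).add h3).congr_deriv (by rw [zero_add, hs])
    have h5 := h4.log (by positivity : 1 + s ≠ 0)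
    have h6 := ((h5.const_mul 2).div_const (Real.log μ))
    have h7 := (hasDerivAt_id x).sub h6
    have hkey : 1 / s = 1 - 2 * (-(μ ^ x * Real.log μ) / (2 * s) / (1 + s)) / Real.log μ := by
      have h1s : (1:ℝ) + s ≠ 0 := by positivity
      field_simp [hL.ne]
      linear_combination (-1:ℝ) * hs2
    rw [hkey]
    exact h7
  have hcont : Continuous F := by
    have hc1 : Continuous fun y : ℝ => μ ^ y := by
      have : (fun y : ℝ => μ ^ y) = fun y => Real.exp (Real.log μ * y) := by
        funext y; rw [Real.rpow_def_of_pos hμ0]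
      rw [this]; continuity
    have hc2 : Continuous fun y : ℝ => 1 + Real.sqrt (1 - μ ^ y) :=
      continuous_const.add ((continuous_const.sub hc1).sqrt)
    have hc3 : Continuous fun y : ℝ => Real.log (1 + Real.sqrt (1 - μ ^ y)) :=
      hc2.log fun y => by positivity
    exact continuous_id.sub ((continuous_const.mul hc3).div_const _)
  -- step bound
  have step : ∀ a : ℝ, 0 ≤ a → 1 / Real.sqrt (1 - μ ^ (a + 1)) ≤ F (a + 1) - F a := by
    intro a ha
    obtain ⟨c, hc, hceq⟩ := exists_hasDerivAt_eq_slope F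
      (fun y => 1 / Real.sqrt (1 - μ ^ y)) (by linarith : a < a + 1)
      hcont.continuousOn (fun x hx => hder x (lt_of_le_of_lt ha hx.1))
    have hc0 : 0 < c := lt_of_le_of_lt ha hc.1
    have hμc : μ ^ c < 1 := Real.rpow_lt_one hμ0.le hμ1 hc0
    have hmono : μ ^ (a + 1) ≤ μ ^ c :=
      Real.rpow_le_rpow_of_exponent_ge hμ0 hμ1.le hc.2.le
    have hcpos : 0 < Real.sqrt (1 - μ ^ c) := Real.sqrt_pos.mpr (by linarith)
    have hle : Real.sqrt (1 - μ ^ c) ≤ Real.sqrt (1 - μ ^ (a + 1)) :=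
      Real.sqrt_le_sqrt (by linarith)
    have : 1 / Real.sqrt (1 - μ ^ (a + 1)) ≤ 1 / Real.sqrt (1 - μ ^ c) :=
      one_div_le_one_div_of_le hcpos hle
    rw [hceq] at this
    simpa using this
  have hF0 : F 0 = 0 := by
    simp [hF, Real.rpow_zero]
  have key : ∑ t ∈ Finset.Icc 1 T, 1 / Real.sqrt (1 - μ ^ t) ≤ F T := by
    have : ∑ t ∈ Finset.Icc 1 T, 1 / Real.sqrt (1 - μ ^ t)
        = ∑ i ∈ Finset.range T, 1 / Real.sqrt (1 - μ ^ ((i : ℝ) + 1)) := by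
      rw [show Finset.Icc 1 T = Finset.Ico 1 (T + 1) by rfl, Finset.sum_Ico_eq_sum_range]
      simp only [Nat.add_sub_cancel]
      refine Finset.sum_congr rfl fun i _ => ?_
      rw [← Real.rpow_natCast μ (1 + i)]
      push_cast
      ring_nf
    rw [this]
    calc ∑ i ∈ Finset.range T, 1 / Real.sqrt (1 - μ ^ ((i : ℝ) + 1))
        ≤ ∑ i ∈ Finset.range T, (F ((i : ℕ) + 1 : ℕ) - F i) := by
          refine Finset.sum_le_sum fun i _ => ?_
          have := step i (Nat.cast_nonneg i)
          push_cast
          convert this using 2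
      _ = F T - F ((0:ℕ):ℝ) := Finset.sum_range_sub (fun i : ℕ => F i) T
      _ = F T := by rw [Nat.cast_zero, hF0, sub_zero]
  have : F T = (T : ℝ) - 2 * Real.log (1 + Real.sqrt (1 - μ ^ T)) / Real.log μ := by
    simp [hF, Real.rpow_natCast]
  linarith [key, this.ge]
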